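/- Let G_1 be a graph on vertex set {1,…,m_1} and G_2 a graph on vertex set {m_1+1,…,m} where m = m_1 + m_2. Let K_{m_1} denote the complete graph on {1,…,m_1}, K_{m_2} the complete graph on {m_1+1,…,m}, and K_m the complete graph on [m]. Then F_{G_1 + K_{m_2}} ∪ F_{K_{m_1} + G_2} = F_{K_m}, i.e., a function f : [m] → ℤ_{≥0} satisfies conditions (i) and (ii) for D(K_m) if and only if it satisfies them for D(G_1 + K_{m_2}) or for D(K_{m_1} + G_2). -/

import Mathlib

open SimpleGraph Polynomial

namespace PQPaper

instance instFintypeLex {α : Type*} [h : Fintype α] : Fintype (Lex α) := h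

/-- The bipartite graph `D(G)` on `V ⊕ V`: edges `{i, ī}` for every vertex `i`,
and `{i, j̄}`, `{ī, j}` for every edge `{i, j}` of `G`. -/
def DG {V : Type*} (G : SimpleGraph V) : SimpleGraph (V ⊕ V) :=
  SimpleGraph.fromRel fun a b =>
    match a, b with
    | Sum.inl i, Sum.inr j => i = j ∨ G.Adj i j
    | _, _ => False

/-- `f : V → ℕ` is a hypertree of the bipartite graph `H` on `V ⊕ W`
(with hyperedge side `V`): `H` has a spanning tree whose degree at each
left vertex `v` is `f v + 1`. -/
def IsHypertree {V W : Type*} (H : SimpleGraph (V ⊕ W)) (f : V → ℕ) : Prop :=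
  ∃ T : SimpleGraph (V ⊕ W), T ≤ H ∧ T.IsTree ∧
    ∀ v : V, (T.neighborSet (Sum.inl v)).ncard = f v + 1

/-- The set of hypertrees of `H`. -/
def HT {V W : Type*} (H : SimpleGraph (V ⊕ W)) : Set (V → ℕ) :=
  {f | IsHypertree H f}

/-- The set of internally inactive hyperedges of a hypertree `f`. -/
def inactive {V W : Type*} [LT V] (H : SimpleGraph (V ⊕ W)) (f : V → ℕ) : Set V :=
  {j | ∃ j', j' < j ∧ ∃ g : V → ℕ,
    g j' = f j' + 1 ∧ (g j : ℤ) = (f j : ℤ) - 1 ∧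
    (∀ i, i ≠ j' → i ≠ j → g i = f i) ∧ IsHypertree H g}

/-- The interior polynomial `I_H(x) = Σ_{f ∈ HT(H)} x^{ῑ(f)}`. -/
noncomputable def interiorPoly {V W : Type*} [Fintype V] [LinearOrder V]
    (H : SimpleGraph (V ⊕ W)) : Polynomial ℤ :=
  ∑ k ∈ Finset.range (Fintype.card V + 1),
    Polynomial.C ({f | f ∈ HT H ∧ (inactive H f).ncard = k}.ncard : ℤ) * Polynomial.X ^ k

/-- The perfectly matchable sets of a graph: vertex sets of matchings of `H`. -/
def PMSets {V : Type*} (H : SimpleGraph V) : Set (Set V) :=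
  {S | ∃ M : H.Subgraph, M.IsMatching ∧ M.verts = S}

/-- The perfectly matchable set polynomial `p(H,x) = Σ_k |PM(H,k)| x^k`. -/
noncomputable def pmsPoly {V : Type*} [Fintype V] (H : SimpleGraph V) : Polynomial ℤ :=
  ∑ k ∈ Finset.range (Fintype.card V + 1),
    Polynomial.C ({S | S ∈ PMSets H ∧ S.ncard = 2 * k}.ncard : ℤ) * Polynomial.X ^ k

/-- Join of two vertex-disjoint graphs. -/
def sumJoin {V W : Type*} (G : SimpleGraph V) (H : SimpleGraph W) : SimpleGraph (V ⊕ W) where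
  Adj a b :=
    match a, b with
    | Sum.inl x, Sum.inl y => G.Adj x y
    | Sum.inr x, Sum.inr y => H.Adj x y
    | Sum.inl _, Sum.inr _ => True
    | Sum.inr _, Sum.inl _ => True
  symm := by
    constructor
    rintro (x | x) (y | y) h
    · exact G.symm.symm _ _ h
    · exact trivial
    · exact trivial
    · exact H.symm.symm _ _ h
  loopless := by
    constructor
    rintro (x | x) h
    · exact G.loopless.irrefl x h
    · exact H.loopless.irrefl x h

/-- Join of a family of pairwise vertex-disjoint graphs. -/
def sigmaJoin {ι : Type*} {V : ι → Type*} (G : ∀ i, SimpleGraph (V i)) :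
    SimpleGraph (Σ i, V i) :=
  SimpleGraph.fromRel fun a b =>
    a.1 ≠ b.1 ∨ ∃ (i : ι) (x y : V i), a = ⟨i, x⟩ ∧ b = ⟨i, y⟩ ∧ (G i).Adj x y

/-- A copy of a graph on the lexicographic type synonym of its vertex type. -/
def lexify {α : Type*} (G : SimpleGraph α) : SimpleGraph (Lex α) :=
  G.map toLex.toEmbedding

/-- The polynomial
`f_{ℓ,m}(x) = Σ_{k=0}^{ℓ+m−1} Σ_{α=0}^{k} C(ℓ−1,k−α) C(m,α) Σ_{β=α}^{k} C(ℓ+α−1,β) C(m−α,k−β) x^k`. -/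
noncomputable def fPoly (l m : ℕ) : Polynomial ℤ :=
  ∑ k ∈ Finset.range (l + m),
    Polynomial.C (∑ a ∈ Finset.range (k + 1),
      ((l - 1).choose (k - a) : ℤ) * (m.choose a : ℤ) *
        ∑ b ∈ Finset.Icc a k, ((l + a - 1).choose b : ℤ) * ((m - a).choose (k - b) : ℤ)) *
      Polynomial.X ^ k

/-- The cycle graph on `n` vertices. -/
def cycG (n : ℕ) : SimpleGraph (Fin n) :=
  SimpleGraph.fromRel fun a b =>
    (b : ℕ) = (a : ℕ) + 1 ∨ ((a : ℕ) = n - 1 ∧ (b : ℕ) = 0)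

/-- `Γ(V')`: the set of neighbours in `D(H)` of the left vertices in `V'`,
viewed as a subset of the right copy `[m̄]`. -/
def Gam {m : ℕ} (H : SimpleGraph (Fin m)) (V' : Set (Fin m)) : Set (Fin m) :=
  {j | ∃ i ∈ V', (DG H).Adj (Sum.inl i) (Sum.inr j)}

/-- Condition (ii): `Σ_{i ∈ V'} f(i) ≤ |Γ(V')| − 1` for every nonempty `V' ⊆ [m]`. -/
def cond2 {m : ℕ} (H : SimpleGraph (Fin m)) (f : Fin m → ℕ) : Prop :=
  ∀ V' : Finset (Fin m), V'.Nonempty →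
    (∑ i ∈ V', f i) + 1 ≤ (Gam H (V' : Set (Fin m))).ncard

/-- `F_H`: functions satisfying conditions (i) and (ii) for `D(H)`. -/
def FSet {m : ℕ} (H : SimpleGraph (Fin m)) : Set (Fin m → ℕ) :=
  {f | (∑ i, f i) = m - 1 ∧ cond2 H f}

/-- `η_H(f)`: indices `j` admitting `j' < j` such that the transfer of one unit
from `j` to `j'` again satisfies condition (ii). -/
def eta {m : ℕ} (H : SimpleGraph (Fin m)) (f : Fin m → ℕ) : Set (Fin m) :=
  {j | ∃ j', j' < j ∧ ∃ g : Fin m → ℕ,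
    g j' = f j' + 1 ∧ (g j : ℤ) = (f j : ℤ) - 1 ∧
    (∀ i, i ≠ j' → i ≠ j → g i = f i) ∧ cond2 H g}

/-- `F_H(k) = {f ∈ F_H : |η_H(f)| = k}`. -/
def FSetK {m : ℕ} (H : SimpleGraph (Fin m)) (k : ℕ) : Set (Fin m → ℕ) :=
  {f | f ∈ FSet H ∧ (eta H f).ncard = k}

/-- All edges between `{1,…,m1}` and `{m1+1,…,m}` in `Fin m`. -/
def crossGraph (m m1 : ℕ) : SimpleGraph (Fin m) :=
  SimpleGraph.fromRel fun a b => (a : ℕ) < m1 ∧ m1 ≤ (b : ℕ)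

/-- The complete graph on the first `m1` vertices of `Fin m`. -/
def leftComplete (m m1 : ℕ) : SimpleGraph (Fin m) :=
  SimpleGraph.fromRel fun a b => (a : ℕ) < m1 ∧ (b : ℕ) < m1

/-- The complete graph on the last `m − m1` vertices of `Fin m`. -/
def rightComplete (m m1 : ℕ) : SimpleGraph (Fin m) :=
  SimpleGraph.fromRel fun a b => m1 ≤ (a : ℕ) ∧ m1 ≤ (b : ℕ)

/-- The tilde construction: a bipartite graph `H` on `V ⊕ W` together with two
new vertices `u = inr 0` and `w = inr 1`, where `u` is joined to all of `V` and
`w` is joined to all of `W` and to `u`. -/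
def tilde {V W : Type*} (H : SimpleGraph (V ⊕ W)) : SimpleGraph ((V ⊕ W) ⊕ Fin 2) :=
  SimpleGraph.fromRel fun a b =>
    (∃ x y, a = Sum.inl x ∧ b = Sum.inl y ∧ H.Adj x y) ∨
    (∃ i : V, a = Sum.inl (Sum.inl i) ∧ b = Sum.inr 0) ∨
    (∃ j : W, a = Sum.inl (Sum.inr j) ∧ b = Sum.inr 1) ∨
    (a = Sum.inr 0 ∧ b = Sum.inr 1)


-- AUX LEMMAS START
lemma DG_adj_inl_inr' {V : Type*} (H : SimpleGraph V) (i j : V) :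
    (DG H).Adj (Sum.inl i) (Sum.inr j) ↔ i = j ∨ H.Adj i j := by
  simp [DG, SimpleGraph.fromRel_adj]

lemma Gam_mono' {m : ℕ} {H H' : SimpleGraph (Fin m)} (h : H ≤ H') (V' : Set (Fin m)) :
    Gam H V' ⊆ Gam H' V' := by
  rintro j ⟨i, hi, hadj⟩
  refine ⟨i, hi, ?_⟩
  rw [DG_adj_inl_inr'] at hadj ⊢
  exact hadj.imp id (fun h1 => h h1)

lemma cond2_mono' {m : ℕ} {H H' : SimpleGraph (Fin m)} (h : H ≤ H') {f : Fin m → ℕ}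
    (hf : cond2 H f) : cond2 H' f := fun V' hV' =>
  (hf V' hV').trans (Set.ncard_le_ncard (Gam_mono' h _) (Set.toFinite _))

lemma mem_Gam_self' {m : ℕ} (H : SimpleGraph (Fin m)) (V' : Set (Fin m)) {j : Fin m}
    (hj : j ∈ V') : j ∈ Gam H V' :=
  ⟨j, hj, by rw [DG_adj_inl_inr']; exact Or.inl rfl⟩

lemma cross_adj' {m m1 : ℕ} {i j : Fin m} (hi : (i : ℕ) < m1) (hj : m1 ≤ (j : ℕ)) :
    (crossGraph m m1).Adj i j := by
  rw [crossGraph, SimpleGraph.fromRel_adj]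
  exact ⟨by intro h; subst h; omega, Or.inl ⟨hi, hj⟩⟩

lemma right_adj' {m m1 : ℕ} {i j : Fin m} (hi : m1 ≤ (i : ℕ)) (hj : m1 ≤ (j : ℕ))
    (hne : i ≠ j) : (rightComplete m m1).Adj i j := by
  rw [rightComplete, SimpleGraph.fromRel_adj]
  exact ⟨hne, Or.inl ⟨hi, hj⟩⟩

lemma left_adj' {m m1 : ℕ} {i j : Fin m} (hi : (i : ℕ) < m1) (hj : (j : ℕ) < m1)
    (hne : i ≠ j) : (leftComplete m m1).Adj i j := by
  rw [leftComplete, SimpleGraph.fromRel_adj]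
  exact ⟨hne, Or.inl ⟨hi, hj⟩⟩

lemma ncard_univ_fin' (m : ℕ) : (Set.univ : Set (Fin m)).ncard = m := by
  rw [Set.ncard_univ]; simp

lemma ncard_right' {m m1 : ℕ} : ({j : Fin m | m1 ≤ (j : ℕ)}).ncard = m - m1 := by
  rw [Set.ncard_eq_toFinset_card']
  rw [← Nat.card_Ico m1 m]
  simp only [Set.toFinset_setOf]
  refine Finset.card_nbij (fun j => (j : ℕ)) ?_ ?_ ?_
  · intro a ha; simp at ha ⊢; omega
  · intro a _ b _ hab; exact Fin.val_injective hab
  · intro k hk; simp at hk ⊢; exact ⟨⟨k, hk.2⟩, hk.1, rfl⟩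

lemma ncard_left' {m m1 : ℕ} (h : m1 ≤ m) : ({j : Fin m | (j : ℕ) < m1}).ncard = m1 := by
  rw [Set.ncard_eq_toFinset_card']
  rw [← Finset.card_range m1]
  simp only [Set.toFinset_setOf]
  refine Finset.card_nbij (fun j => (j : ℕ)) ?_ ?_ ?_
  · intro a ha; simp at ha ⊢; omega
  · intro a _ b _ hab; exact Fin.val_injective hab
  · intro k hk; simp at hk ⊢; exact ⟨⟨k, by omega⟩, hk, rfl⟩

/-- If `V'` contains a right vertex, `Gam` of the right-complete + cross graph is everything. -/
lemma Gam_univ_right' {m m1 : ℕ} {V' : Set (Fin m)} {r : Fin m} (hr : r ∈ V')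
    (hr1 : m1 ≤ (r : ℕ)) : Gam (rightComplete m m1 ⊔ crossGraph m m1) V' = Set.univ := by
  apply Set.eq_univ_of_forall
  intro j
  refine ⟨r, hr, ?_⟩
  rw [DG_adj_inl_inr']
  by_cases hj : r = j
  · exact Or.inl hj
  · refine Or.inr ?_
    rw [SimpleGraph.sup_adj]
    by_cases hjm : m1 ≤ (j : ℕ)
    · exact Or.inl (right_adj' hr1 hjm hj)
    · refine Or.inr ((cross_adj' (by omega) hr1).symm)

/-- If `V'` contains a left vertex, `Gam` of the left-complete + cross graph is everything. -/
lemma Gam_univ_left' {m m1 : ℕ} {V' : Set (Fin m)} {l : Fin m} (hl : l ∈ V')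
    (hl1 : (l : ℕ) < m1) : Gam (leftComplete m m1 ⊔ crossGraph m m1) V' = Set.univ := by
  apply Set.eq_univ_of_forall
  intro j
  refine ⟨l, hl, ?_⟩
  rw [DG_adj_inl_inr']
  by_cases hj : l = j
  · exact Or.inl hj
  · refine Or.inr ?_
    rw [SimpleGraph.sup_adj]
    by_cases hjm : m1 ≤ (j : ℕ)
    · exact Or.inr (cross_adj' hl1 hjm)
    · exact Or.inl (left_adj' hl1 (by omega) hj)

lemma right_subset_Gam' {m m1 : ℕ} {V' : Set (Fin m)} {l : Fin m} (hl : l ∈ V')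
    (hl1 : (l : ℕ) < m1) : {j : Fin m | m1 ≤ (j : ℕ)} ⊆ Gam (crossGraph m m1) V' := by
  intro j hj
  exact ⟨l, hl, by rw [DG_adj_inl_inr']; exact Or.inr (cross_adj' hl1 hj)⟩

lemma left_subset_Gam' {m m1 : ℕ} {V' : Set (Fin m)} {r : Fin m} (hr : r ∈ V')
    (hr1 : m1 ≤ (r : ℕ)) : {j : Fin m | (j : ℕ) < m1} ⊆ Gam (crossGraph m m1) V' := by
  intro j hj
  exact ⟨r, hr, by rw [DG_adj_inl_inr']; exact Or.inr (cross_adj' hj hr1).symm⟩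
-- AUX LEMMAS END

/-- For `G₁` supported on `{1,…,m₁}` and `G₂` supported on
`{m₁+1,…,m}` with `m = m₁ + m₂`, one has `F_{G₁+K_{m₂}} ∪ F_{K_{m₁}+G₂} = F_{K_m}`. -/
theorem FSet_join_union (m1 m2 m : ℕ) (hm : m = m1 + m2)
    (G1 G2 : SimpleGraph (Fin m))
    (hG1 : ∀ i j, G1.Adj i j → (i : ℕ) < m1 ∧ (j : ℕ) < m1)
    (hG2 : ∀ i j, G2.Adj i j → m1 ≤ (i : ℕ) ∧ m1 ≤ (j : ℕ)) :
    FSet (G1 ⊔ rightComplete m m1 ⊔ crossGraph m m1) ∪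
        FSet (leftComplete m m1 ⊔ G2 ⊔ crossGraph m m1) =
      FSet (⊤ : SimpleGraph (Fin m)) := by
  ext f
  simp only [Set.mem_union, FSet, Set.mem_setOf_eq]
  constructor
  · rintro (⟨h1, h2⟩ | ⟨h1, h2⟩)
    · exact ⟨h1, cond2_mono' le_top h2⟩
    · exact ⟨h1, cond2_mono' le_top h2⟩
  · rintro ⟨hsum, -⟩
    by_cases hc : cond2 (G1 ⊔ rightComplete m m1 ⊔ crossGraph m m1) f
    · exact Or.inl ⟨hsum, hc⟩
    refine Or.inr ⟨hsum, ?_⟩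
    rw [cond2] at hc
    push_neg at hc
    obtain ⟨A, hA, hAcard⟩ := hc
    -- hAcard : ncard (Gam H1 A) < ∑ i ∈ A, f i + 1
    obtain ⟨a0, ha0⟩ := hA
    have hmpos : 0 < m := a0.pos
    have hsumA_le : ∑ i ∈ A, f i ≤ m - 1 := hsum ▸ Finset.sum_le_sum_of_subset (Finset.subset_univ A)
    -- H1 contains rightComplete ⊔ crossGraph and crossGraph
    have hle1 : rightComplete m m1 ⊔ crossGraph m m1 ≤
        G1 ⊔ rightComplete m m1 ⊔ crossGraph m m1 := by
      rw [sup_assoc]; exact le_sup_right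
    have hcross1 : crossGraph m m1 ≤ G1 ⊔ rightComplete m m1 ⊔ crossGraph m m1 :=
      le_sup_right
    -- every element of A is a left vertex
    have hAleft : ∀ i ∈ A, (i : ℕ) < m1 := by
      by_contra hco
      push_neg at hco
      obtain ⟨r, hrA, hr1⟩ := hco
      have h1 : (Set.univ : Set (Fin m)) ⊆
          Gam (G1 ⊔ rightComplete m m1 ⊔ crossGraph m m1) (↑A : Set (Fin m)) := by
        rw [← Gam_univ_right' (V' := (↑A : Set (Fin m))) (Finset.mem_coe.mpr hrA) hr1]
        exact Gam_mono' hle1 _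
      have h2 := Set.ncard_le_ncard h1 (Set.toFinite _)
      rw [ncard_univ_fin'] at h2
      omega
    -- lower bound: |A| + m2 ≤ ∑_A f
    have hkey : A.card + m2 ≤ ∑ i ∈ A, f i := by
      have hsub : (↑A : Set (Fin m)) ∪ {j : Fin m | m1 ≤ (j : ℕ)} ⊆
          Gam (G1 ⊔ rightComplete m m1 ⊔ crossGraph m m1) (↑A : Set (Fin m)) := by
        intro j hj
        rcases hj with hj | hj
        · exact mem_Gam_self' _ _ hj
        · exact Gam_mono' hcross1 _ (right_subset_Gam' (Finset.mem_coe.mpr ha0)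
            (hAleft a0 ha0) hj)
      have hdisj : Disjoint (↑A : Set (Fin m)) {j : Fin m | m1 ≤ (j : ℕ)} := by
        rw [Set.disjoint_left]
        intro i hi hi2
        have := hAleft i (Finset.mem_coe.mp hi)
        simp only [Set.mem_setOf_eq] at hi2
        omega
      have hcard : ((↑A : Set (Fin m)) ∪ {j : Fin m | m1 ≤ (j : ℕ)}).ncard
          = A.card + (m - m1) := by
        rw [Set.ncard_union_eq hdisj (Set.toFinite _) (Set.toFinite _),
          Set.ncard_coe_finset, ncard_right']
      have := Set.ncard_le_ncard hsub (Set.toFinite _)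
      rw [hcard] at this
      omega
    have hAcard1 : 1 ≤ A.card := Finset.card_pos.mpr ⟨a0, ha0⟩
    -- now prove cond2 for H2
    intro B hB
    obtain ⟨b0, hb0⟩ := hB
    by_cases hBleft : ∃ l ∈ B, (l : ℕ) < m1
    · obtain ⟨l, hlB, hl1⟩ := hBleft
      have hle2 : leftComplete m m1 ⊔ crossGraph m m1 ≤
          leftComplete m m1 ⊔ G2 ⊔ crossGraph m m1 := by
        rw [sup_assoc]
        exact sup_le_sup_left le_sup_right _
      have h1 : (Set.univ : Set (Fin m)) ⊆
          Gam (leftComplete m m1 ⊔ G2 ⊔ crossGraph m m1) (↑B : Set (Fin m)) := by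
        rw [← Gam_univ_left' (V' := (↑B : Set (Fin m))) (Finset.mem_coe.mpr hlB) hl1]
        exact Gam_mono' hle2 _
      have h2 := Set.ncard_le_ncard h1 (Set.toFinite _)
      rw [ncard_univ_fin'] at h2
      have hsumB_le : ∑ i ∈ B, f i ≤ m - 1 :=
        hsum ▸ Finset.sum_le_sum_of_subset (Finset.subset_univ B)
      omega
    · push_neg at hBleft
      -- B ⊆ right vertices; A and B disjoint
      have hdisjAB : Disjoint A B := by
        rw [Finset.disjoint_left]
        intro i hiA hiB
        exact absurd (hAleft i hiA) (not_lt.mpr (hBleft i hiB))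
      have hsumAB : ∑ i ∈ A, f i + ∑ i ∈ B, f i ≤ m - 1 := by
        rw [← Finset.sum_union hdisjAB]
        exact hsum ▸ Finset.sum_le_sum_of_subset (Finset.subset_univ _)
      have hcross2 : crossGraph m m1 ≤ leftComplete m m1 ⊔ G2 ⊔ crossGraph m m1 :=
        le_sup_right
      have hsub : (↑B : Set (Fin m)) ∪ {j : Fin m | (j : ℕ) < m1} ⊆
          Gam (leftComplete m m1 ⊔ G2 ⊔ crossGraph m m1) (↑B : Set (Fin m)) := by
        intro j hj
        rcases hj with hj | hj
        · exact mem_Gam_self' _ _ hj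
        · exact Gam_mono' hcross2 _ (left_subset_Gam' (Finset.mem_coe.mpr hb0)
            (hBleft b0 hb0) hj)
      have hdisj : Disjoint (↑B : Set (Fin m)) {j : Fin m | (j : ℕ) < m1} := by
        rw [Set.disjoint_left]
        intro i hi hi2
        have := hBleft i (Finset.mem_coe.mp hi)
        simp only [Set.mem_setOf_eq] at hi2
        omega
      have hm1le : m1 ≤ m := by omega
      have hcard : ((↑B : Set (Fin m)) ∪ {j : Fin m | (j : ℕ) < m1}).ncard
          = B.card + m1 := by
        rw [Set.ncard_union_eq hdisj (Set.toFinite _) (Set.toFinite _),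
          Set.ncard_coe_finset, ncard_left' hm1le]
      have hge := Set.ncard_le_ncard hsub (Set.toFinite _)
      rw [hcard] at hge
      omega

end PQPaper
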